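/- Let n ≥ 1 and let p be an element of the free (noncommutative) ℤ-algebra on n generators X₁,…,Xₙ. Then the following are equivalent: (a) for every m and every family f₁,…,fₙ of linear endomorphisms of the Euclidean space ℝ^m that are pairwise commuting (f_i ∘ f_j = f_j ∘ f_i) and symmetric (⟪f_i(v), w⟫ = ⟪v, f_i(w)⟫ for all v, w), the evaluation p(f₁,…,fₙ) (obtained from the unique ℤ-algebra homomorphism from the free algebra to the endomorphism algebra sending X_i ↦ f_i) is an invertible endomorphism; (b) for every ρ = (ρ₁,…,ρₙ) ∈ ℝⁿ, the evaluation p(ρ₁,…,ρₙ) (via the ℤ-algebra homomorphism to ℝ sending X_i ↦ ρ_i) is nonzero. -/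

import Mathlib

open Module.End

private lemma eval_joint_eig {n m : ℕ}
    (f : Fin n → Module.End ℝ (EuclideanSpace ℝ (Fin m))) (χ : Fin n → ℝ)
    (p : FreeAlgebra ℤ (Fin n)) :
    ∀ u ∈ (⨅ i, eigenspace (f i) (χ i)),
      FreeAlgebra.lift ℤ f p u = (FreeAlgebra.lift ℤ χ p) • u := by
  induction p with
  | grade0 r =>
    intro u _
    simp [Algebra.algebraMap_eq_smul_one, Int.cast_smul_eq_zsmul]
  | grade1 i =>
    intro u hu
    have hi : u ∈ eigenspace (f i) (χ i) := (Submodule.mem_iInf _).mp hu i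
    rw [mem_eigenspace_iff] at hi
    simpa using hi
  | mul a b ha hb =>
    intro u hu
    have hbu : FreeAlgebra.lift ℤ f b u = (FreeAlgebra.lift ℤ χ b) • u := hb u hu
    simp only [map_mul, Module.End.mul_apply, hbu, map_smul, ha u hu, smul_smul]
    ring_nf
  | add a b ha hb =>
    intro u hu
    simp [map_add, LinearMap.add_apply, ha u hu, hb u hu, add_smul]

theorem stmt_19 (n : ℕ) (hn : 1 ≤ n) (p : FreeAlgebra ℤ (Fin n)) :
    (∀ (m : ℕ) (f : Fin n → Module.End ℝ (EuclideanSpace ℝ (Fin m))),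
        (∀ i j, f i * f j = f j * f i) →
        (∀ i (v w : EuclideanSpace ℝ (Fin m)),
          (inner ℝ (f i v) w : ℝ) = inner ℝ v (f i w)) →
        IsUnit (FreeAlgebra.lift ℤ f p)) ↔
    (∀ ρ : Fin n → ℝ, FreeAlgebra.lift ℤ ρ p ≠ 0) := by
  constructor
  · intro h ρ hρ
    set E := EuclideanSpace ℝ (Fin 1)
    set f : Fin n → Module.End ℝ E := fun i => algebraMap ℝ (Module.End ℝ E) (ρ i) with hf
    have hkey : FreeAlgebra.lift ℤ f p = algebraMap ℝ (Module.End ℝ E) (FreeAlgebra.lift ℤ ρ p) := by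
      have : (((Algebra.ofId ℝ (Module.End ℝ E)).restrictScalars ℤ).comp
          (FreeAlgebra.lift ℤ ρ)) = FreeAlgebra.lift ℤ f := by
        ext i
        simp [Algebra.ofId, hf]
      rw [← this]
      rfl
    have hu := h 1 f
      (fun i j => by simp [hf, ← map_mul, mul_comm])
      (fun i v w => by
        simp [hf, Module.algebraMap_end_apply, real_inner_smul_left, real_inner_smul_right]
        rw [Module.algebraMap_end_apply, Module.algebraMap_end_apply, real_inner_smul_left, real_inner_smul_right])
    rw [hkey, hρ, map_zero] at hu
    exact not_isUnit_zero hu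
  · intro h m f hcomm hsym
    set L := FreeAlgebra.lift ℤ f p with hL
    have hsurj : Function.Surjective L := by
      rw [← LinearMap.range_eq_top, ← top_le_iff]
      have htop : (⨆ χ : Fin n → ℝ, ⨅ i, eigenspace (f i) (χ i)) = ⊤ :=
        LinearMap.IsSymmetric.iSup_iInf_eq_top_of_commute
          (fun i v w => hsym i v w) (fun i j _ => hcomm i j)
      rw [← htop]
      refine iSup_le fun χ u hu => ?_
      have hc : FreeAlgebra.lift ℤ χ p ≠ 0 := h χ
      refine ⟨(FreeAlgebra.lift ℤ χ p)⁻¹ • u, ?_⟩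
      have hmem : (FreeAlgebra.lift ℤ χ p)⁻¹ • u ∈ ⨅ i, eigenspace (f i) (χ i) :=
        Submodule.smul_mem _ _ hu
      rw [eval_joint_eig f χ p _ hmem, smul_smul, mul_inv_cancel₀ hc, one_smul]
    exact (Module.End.isUnit_iff L).mpr
      ⟨(LinearMap.injective_iff_surjective).mpr hsurj, hsurj⟩
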